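/- Let Π be a nonempty policy class over the grid state space with binary actions satisfying stationarity. Then min{2^{⌊log₂ dim_T(Π)⌋}, 2^H} ≤ 𝔠(Π), where dim_T(Π) is the threshold dimension of Π. -/
import Mathlib


/-- A deterministic MDP over a layered state space. -/
structure DetMDP (S : ℕ → Type) (A : Type) where
  start : S 0
  step : ∀ h : ℕ, S h → A → S (h + 1)

/-- The trajectory of a policy in a deterministic MDP. -/
def DetMDP.traj {S : ℕ → Type} {A : Type} (M : DetMDP S A) (π : ∀ h : ℕ, S h → A) :
    ∀ h : ℕ, S h
  | 0 => M.start
  | h + 1 => M.step h (M.traj π h) (π h (M.traj π h))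

/-- Reachability of a state-action pair at layer `h` by the class `P` in `M`. -/
def Reachable {S : ℕ → Type} {A : Type} (M : DetMDP S A) (P : Set (∀ h : ℕ, S h → A))
    (h : ℕ) (s : S h) (a : A) : Prop :=
  ∃ π ∈ P, M.traj π h = s ∧ π h s = a

/-- Cumulative reachability at layer `h`. -/
noncomputable def Creach {S : ℕ → Type} {A : Type} (M : DetMDP S A)
    (P : Set (∀ h : ℕ, S h → A)) (h : ℕ) : ℕ :=
  Set.ncard {p : S h × A | Reachable M P h p.1 p.2}

/-- Spanning capacity of `P` with horizon `H`. -/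
noncomputable def spanCap (H : ℕ) (S : ℕ → Type) (A : Type)
    (P : Set (∀ h : ℕ, S h → A)) : ℕ :=
  sSup {n : ℕ | ∃ h < H, ∃ M : DetMDP S A, n = Creach M P h}

/-- The policy class `P` over the grid state space is stationary: every policy takes the
same action on the states `s_(j,1), …, s_(j,H)` of a given index `j` (here: on `s_(j,h)`
for every layer `h`).  We write `π 0 j` for this common value `π(j)`. -/
def Stationary (K : ℕ) (P : Set (∀ _ : ℕ, Fin K → Bool)) : Prop :=
  ∀ π ∈ P, ∀ j : Fin K, ∀ h h' : ℕ, π h j = π h' j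

/-- A threshold witness of length `N` for the class `P` with respect to the base policy
`πb`: indices `j_1, …, j_N` and policies `π_1, …, π_N ∈ P` such that for every `l`,
`π_l(j_m) ≠ π̄(j_m)` for all `m ≥ l` while `π_l(j_k) = π̄(j_k)` for all `k < l`. -/
def ThresholdWitness (K : ℕ) (P : Set (∀ _ : ℕ, Fin K → Bool))
    (πb : ∀ _ : ℕ, Fin K → Bool) (N : ℕ) : Prop :=
  ∃ (j : Fin N → Fin K) (p : Fin N → ∀ _ : ℕ, Fin K → Bool),
    (∀ l : Fin N, p l ∈ P) ∧
    ∀ l : Fin N, (∀ m : Fin N, l ≤ m → p l 0 (j m) ≠ πb 0 (j m)) ∧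
      ∀ k : Fin N, k < l → p l 0 (j k) = πb 0 (j k)

/-- The threshold dimension `dim_T(P) = sup_{π̄ ∈ P} dim_T(P; π̄)`: the length of the longest
threshold witness with respect to some base policy of `P`. -/
noncomputable def dimT (K : ℕ) (P : Set (∀ _ : ℕ, Fin K → Bool)) : ℕ :=
  sSup {N : ℕ | ∃ πb ∈ P, ThresholdWitness K P πb N}

namespace ThAux

def mstar (D h b : ℕ) : ℕ := b * 2^(D-h) + (2^(D-h-1) - 1)

lemma mstar_lt {D h b : ℕ} (hh : h < D) (hb : b < 2^h) : mstar D h b < 2^D := by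
  have h1 : (b+1) * 2^(D-h) ≤ 2^h * 2^(D-h) := Nat.mul_le_mul_right _ (by omega)
  have h2 : 2^h * 2^(D-h) = 2^D := by rw [← pow_add]; congr 1; omega
  have h3 : 2^(D-h-1) ≤ 2^(D-h) := Nat.pow_le_pow_right (by norm_num) (by omega)
  have h4 : 0 < 2^(D-h-1) := Nat.two_pow_pos _
  have h5 : (b+1) * 2^(D-h) = b * 2^(D-h) + 2^(D-h) := by ring
  unfold mstar
  omega

lemma mstar_div {D h b : ℕ} (hh : h < D) : mstar D h b / 2^(D-h) = b := by
  have h3 : 2^(D-h-1) - 1 < 2^(D-h) := by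
    have := Nat.pow_le_pow_right (show 0 < 2 by norm_num) (show D-h-1 ≤ D-h by omega)
    have := Nat.two_pow_pos (D-h-1); omega
  unfold mstar
  rw [Nat.mul_comm, Nat.mul_add_div (Nat.two_pow_pos _), Nat.div_eq_of_lt h3]
  omega

lemma le_pivot_iff {X l : ℕ} (hX : 0 < X) :
    l ≤ (l / (X*2)) * (X*2) + (X - 1) ↔ (l / X) % 2 = 0 := by
  have hb : l / (X*2) = (l / X) / 2 := (Nat.div_div_eq_div_mul l X 2).symm
  have hdm2 := Nat.div_add_mod (l / X) 2
  have hexp : (2 * (l/(X*2)) + 1) * X = (l/(X*2)) * (X*2) + X := by ring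
  have h2 : l ≤ (l/(X*2)) * (X*2) + (X - 1) ↔ l < (2 * (l/(X*2)) + 1) * X := by omega
  rw [h2, ← Nat.div_lt_iff_lt_mul hX]
  omega

lemma le_mstar_iff {D h l : ℕ} (hh : h + 1 < D) :
    (l ≤ mstar D h (l / 2^(D-h)) ↔ (l / 2^(D-h-1)) % 2 = 0) := by
  have hX : 0 < 2^(D-h-1) := Nat.two_pow_pos _
  have hXe : 2^(D-h-1) * 2 = 2^(D-h) := by rw [← pow_succ]; congr 1; omega
  have := le_pivot_iff (l := l) hX
  rw [hXe] at this
  unfold mstar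
  exact this

lemma succ_node {D h l : ℕ} (hh : h + 1 < D) :
    2 * (l / 2^(D-h)) + (l / 2^(D-h-1)) % 2 = l / 2^(D-(h+1)) := by
  have h1 : D - (h+1) = D - h - 1 := by omega
  have h2 : l / 2^(D-h-1) / 2 = l / 2^(D-h) := by
    rw [Nat.div_div_eq_div_mul, ← pow_succ]; congr 2; omega
  rw [h1]
  have := Nat.div_add_mod (l / 2^(D-h-1)) 2
  omega

/-- The binary-search-tree MDP on threshold indices. -/
noncomputable def treeMDP (D K : ℕ) (j : Fin (2^D) → Fin K) (base : Fin K → Bool) :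
    DetMDP (fun _ => Fin K) Bool where
  start := j ⟨mstar D 0 0 % 2^D, Nat.mod_lt _ (Nat.two_pow_pos _)⟩
  step h s a :=
    j ⟨mstar D (h+1)
        (2 * ((Function.invFun j s : Fin (2^D)).val / 2^(D-h)) +
          (if a = base s then 1 else 0)) % 2^D,
      Nat.mod_lt _ (Nat.two_pow_pos _)⟩

theorem traj_eq {D K : ℕ} (j : Fin (2^D) → Fin K) (base : Fin K → Bool)
    (hinj : Function.Injective j) (π : ∀ _ : ℕ, Fin K → Bool)
    (hπ : ∀ h s, π h s = π 0 s) (l : Fin (2^D))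
    (hdis : ∀ m : Fin (2^D), (π 0 (j m) ≠ base (j m) ↔ l.val ≤ m.val)) :
    ∀ h, h < D →
      (treeMDP D K j base).traj π h =
        j ⟨mstar D h (l.val / 2^(D-h)) % 2^D, Nat.mod_lt _ (Nat.two_pow_pos _)⟩ := by
  intro h
  induction h with
  | zero =>
    intro hD
    show (treeMDP D K j base).start = _
    unfold treeMDP
    simp only
    congr 2
    rw [Nat.sub_zero, Nat.div_eq_of_lt l.isLt]
  | succ h ih =>
    intro hD
    have hh : h < D := by omega
    have hbval : l.val / 2^(D-h) < 2^h := by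
      rw [Nat.div_lt_iff_lt_mul (Nat.two_pow_pos _), ← pow_add]
      have : h + (D - h) = D := by omega
      rw [this]; exact l.isLt
    have hms : mstar D h (l.val / 2^(D-h)) < 2^D := mstar_lt hh hbval
    show (treeMDP D K j base).step h ((treeMDP D K j base).traj π h)
        (π h ((treeMDP D K j base).traj π h)) = _
    rw [ih hh]
    set m : Fin (2^D) := ⟨mstar D h (l.val / 2^(D-h)) % 2^D, Nat.mod_lt _ (Nat.two_pow_pos _)⟩
      with hm
    have hmval : m.val = mstar D h (l.val / 2^(D-h)) := Nat.mod_eq_of_lt hms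
    have hiff := hdis m
    have hle := le_mstar_iff (l := l.val) hD
    rw [← hmval] at hle
    have hif : (if π 0 (j m) = base (j m) then 1 else 0) = (l.val / 2^(D-h-1)) % 2 := by
      rcases Nat.mod_two_eq_zero_or_one (l.val / 2^(D-h-1)) with h0 | h1
      · rw [if_neg (hiff.mpr (hle.mpr h0))]; omega
      · have hpe : π 0 (j m) = base (j m) := by
          by_contra hc
          have := hle.mp (hiff.mp hc); omega
        rw [if_pos hpe]; omega
    unfold treeMDP
    simp only
    congr 2
    rw [Function.leftInverse_invFun hinj m, hmval, mstar_div hh, hπ h (j m), hif,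
      succ_node hD]

lemma witness_inj {K N : ℕ} {πb : ∀ _ : ℕ, Fin K → Bool}
    {j : Fin N → Fin K} {p : Fin N → ∀ _ : ℕ, Fin K → Bool}
    (hcond : ∀ l : Fin N, (∀ m : Fin N, l ≤ m → p l 0 (j m) ≠ πb 0 (j m)) ∧
      ∀ k : Fin N, k < l → p l 0 (j k) = πb 0 (j k)) :
    Function.Injective j := by
  intro a b hab
  by_contra hne
  rcases lt_or_gt_of_ne hne with hlt | hlt
  · have h1 := (hcond b).2 a hlt
    have h2 := (hcond b).1 b le_rfl
    rw [hab] at h1; exact h2 h1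
  · have h1 := (hcond a).2 b hlt
    have h2 := (hcond a).1 a le_rfl
    rw [← hab] at h1; exact h2 h1

lemma witness_le {K N : ℕ} {P : Set (∀ _ : ℕ, Fin K → Bool)}
    {πb : ∀ _ : ℕ, Fin K → Bool} (hw : ThresholdWitness K P πb N) : N ≤ K := by
  obtain ⟨j, p, hp, hcond⟩ := hw
  have := Fintype.card_le_of_injective j (witness_inj hcond)
  simpa using this

lemma witness_mono {K N M : ℕ} {P : Set (∀ _ : ℕ, Fin K → Bool)}
    {πb : ∀ _ : ℕ, Fin K → Bool}
    (hw : ThresholdWitness K P πb N) (hMN : M ≤ N) : ThresholdWitness K P πb M := by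
  obtain ⟨j, p, hp, hcond⟩ := hw
  refine ⟨fun m => j (Fin.castLE hMN m), fun l => p (Fin.castLE hMN l),
    fun l => hp _, fun l => ⟨fun m hlm => (hcond _).1 _ ?_, fun k hkl => (hcond _).2 _ ?_⟩⟩
  · exact Fin.le_def.mpr (Fin.le_def.mp hlm)
  · exact Fin.lt_def.mpr (Fin.lt_def.mp hkl)

lemma dimT_attained {K : ℕ} {P : Set (∀ _ : ℕ, Fin K → Bool)} (hne : P.Nonempty) :
    ∃ πb ∈ P, ThresholdWitness K P πb (dimT K P) := by
  obtain ⟨π0, hπ0⟩ := hne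
  have hmem : (0 : ℕ) ∈ {N : ℕ | ∃ πb ∈ P, ThresholdWitness K P πb N} :=
    ⟨π0, hπ0, Fin.elim0, Fin.elim0, fun l => l.elim0, fun l => l.elim0⟩
  have hbdd : BddAbove {N : ℕ | ∃ πb ∈ P, ThresholdWitness K P πb N} := by
    refine ⟨K, fun N hN => ?_⟩
    obtain ⟨πb, _, hw⟩ := hN
    exact witness_le hw
  exact Nat.sSup_mem ⟨0, hmem⟩ hbdd

lemma creach_le {K : ℕ} (P : Set (∀ _ : ℕ, Fin K → Bool))
    (M : DetMDP (fun _ => Fin K) Bool) (h : ℕ) : Creach M P h ≤ 2 * K := by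
  unfold Creach
  refine le_trans (Set.ncard_le_ncard (Set.subset_univ _) Set.finite_univ) ?_
  rw [Set.ncard_univ, Nat.card_eq_fintype_card]
  simp [Fintype.card_prod]
  omega

lemma le_spanCap {K H n : ℕ} (P : Set (∀ _ : ℕ, Fin K → Bool))
    (M : DetMDP (fun _ => Fin K) Bool) (h : ℕ) (hh : h < H)
    (hn : n ≤ Creach M P h) : n ≤ spanCap H (fun _ => Fin K) Bool P := by
  have hbdd : BddAbove {n : ℕ | ∃ h < H, ∃ M : DetMDP (fun _ => Fin K) Bool,
      n = Creach M P h} := by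
    refine ⟨2 * K, fun n hn => ?_⟩
    obtain ⟨h', _, M', rfl⟩ := hn
    exact creach_le P M' h'
  exact le_trans hn (le_csSup hbdd ⟨h, hh, M, rfl⟩)

lemma one_le_creach {K : ℕ} (M : DetMDP (fun _ => Fin K) Bool)
    {P : Set (∀ _ : ℕ, Fin K → Bool)} {π} (hπ : π ∈ P) (h : ℕ) :
    1 ≤ Creach M P h := by
  unfold Creach
  have hmem : (M.traj π h, π h (M.traj π h)) ∈
      {q : (fun _ => Fin K) h × Bool | Reachable M P h q.1 q.2} := ⟨π, hπ, rfl, rfl⟩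
  have := (Set.ncard_pos (Set.toFinite _)).mpr ⟨_, hmem⟩
  omega

end ThAux

open ThAux in
theorem threshold_le_spanCap (K H : ℕ) (hH : 1 ≤ H) (hK : 1 ≤ K)
    (P : Set (∀ _ : ℕ, Fin K → Bool)) (hne : P.Nonempty) (hstat : Stationary K P) :
    min (2 ^ (Nat.log 2 (dimT K P))) (2 ^ H) ≤ spanCap H (fun _ => Fin K) Bool P := by
  have hmin : min (2 ^ (Nat.log 2 (dimT K P))) (2 ^ H)
      = 2 ^ (min (Nat.log 2 (dimT K P)) H) := by
    rcases le_total (Nat.log 2 (dimT K P)) H with h | h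
    · rw [min_eq_left h, min_eq_left (Nat.pow_le_pow_right (by norm_num) h)]
    · rw [min_eq_right h, min_eq_right (Nat.pow_le_pow_right (by norm_num) h)]
  rw [hmin]
  set D := min (Nat.log 2 (dimT K P)) H with hD
  rcases Nat.eq_zero_or_pos D with hD0 | hD1
  · rw [hD0, pow_zero]
    obtain ⟨π0, hπ0⟩ := hne
    exact le_spanCap P ⟨⟨0, hK⟩, fun _ s _ => s⟩ 0 hH (one_le_creach _ hπ0 0)
  · have hDH : D ≤ H := min_le_right _ _
    have hdim0 : dimT K P ≠ 0 := by
      intro h0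
      rw [hD, h0] at hD1
      simp at hD1
    have h2D : 2 ^ D ≤ dimT K P :=
      le_trans (Nat.pow_le_pow_right (by norm_num) (min_le_left _ _))
        (Nat.pow_log_le_self 2 hdim0)
    obtain ⟨πb, hπb, hw⟩ := dimT_attained (K := K) (P := P) hne
    obtain ⟨j, p, hp, hcond⟩ := witness_mono hw h2D
    have hinj : Function.Injective j := witness_inj hcond
    set base : Fin K → Bool := πb 0 with hbase
    set M1 := treeMDP D K j base with hM1
    set hf := D - 1 with hhf
    have hfD : hf < D := by omega
    have hfH : hf < H := by omega
    have hDhf : D - hf = 1 := by omega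
    have hπl : ∀ l : Fin (2^D), ∀ h s, p l h s = p l 0 s :=
      fun l h s => hstat (p l) (hp l) s h 0
    have hdisl : ∀ l m : Fin (2^D), (p l 0 (j m) ≠ base (j m) ↔ l.val ≤ m.val) := by
      intro l m
      constructor
      · intro hne'
        by_contra hlt
        exact hne' ((hcond l).2 m (Fin.lt_def.mpr (Nat.lt_of_not_le hlt)))
      · intro hle
        exact (hcond l).1 m (Fin.le_def.mpr hle)
    have htraj : ∀ l : Fin (2^D),
        M1.traj (p l) hf =
          j ⟨mstar D hf (l.val / 2^(D-hf)) % 2^D, Nat.mod_lt _ (Nat.two_pow_pos _)⟩ :=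
      fun l => traj_eq j base hinj (p l) (hπl l) l (hdisl l) hf hfD
    have hbval : ∀ l : Fin (2^D), l.val / 2^(D-hf) < 2^hf := by
      intro l
      rw [Nat.div_lt_iff_lt_mul (Nat.two_pow_pos _), ← pow_add]
      have : hf + (D - hf) = D := by omega
      rw [this]; exact l.isLt
    have hmsval : ∀ l : Fin (2^D), mstar D hf (l.val / 2^(D-hf)) % 2^D
        = (l.val / 2) * 2 := by
      intro l
      rw [Nat.mod_eq_of_lt (mstar_lt hfD (hbval l))]
      unfold mstar
      rw [hDhf]
      norm_num
    set node : Fin (2^D) → Fin (2^D) := fun l =>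
      ⟨mstar D hf (l.val / 2^(D-hf)) % 2^D, Nat.mod_lt _ (Nat.two_pow_pos _)⟩ with hnode
    set g : Fin (2^D) → Fin K × Bool := fun l =>
      (j (node l), p l 0 (j (node l))) with hg
    have hgmem : ∀ l : Fin (2^D),
        g l ∈ {q : Fin K × Bool | Reachable M1 P hf q.1 q.2} :=
      fun l => ⟨p l, hp l, htraj l, hπl l hf _⟩
    have hparity : ∀ l : Fin (2^D),
        (p l 0 (j (node l)) ≠ base (j (node l)) ↔ l.val % 2 = 0) := by
      intro l
      rw [hdisl l (node l)]
      have hnval : (node l).val = (l.val / 2) * 2 := hmsval l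
      rw [hnval]
      have := Nat.div_add_mod l.val 2
      omega
    have hginj : Function.Injective g := by
      intro a b hab
      have h1 : j (node a) = j (node b) := congrArg Prod.fst hab
      have h2 : node a = node b := hinj h1
      have h3 : mstar D hf (a.val / 2^(D-hf)) % 2^D
          = mstar D hf (b.val / 2^(D-hf)) % 2^D := congrArg Fin.val h2
      rw [hmsval a, hmsval b] at h3
      have h4 : p a 0 (j (node a)) = p b 0 (j (node b)) := congrArg Prod.snd hab
      have hpa := hparity a
      have hpb := hparity b
      rw [h2] at hpa h4
      have hmod : a.val % 2 = b.val % 2 := by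
        by_cases hc : p b 0 (j (node b)) = base (j (node b))
        · have ha' : ¬ a.val % 2 = 0 := fun hq => (hpa.mpr hq) (h4 ▸ hc)
          have hb' : ¬ b.val % 2 = 0 := fun hq => (hpb.mpr hq) hc
          omega
        · have := hpa.mp (h4 ▸ hc)
          have := hpb.mp hc
          omega
      exact Fin.ext (by omega)
    refine le_spanCap P M1 hf hfH ?_
    unfold Creach
    rw [← Nat.card_coe_set_eq]
    have hcard : Nat.card (Fin (2^D)) ≤
        Nat.card {q : (fun _ => Fin K) hf × Bool | Reachable M1 P hf q.1 q.2} := by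
      refine Nat.card_le_card_of_injective
        (fun l => ⟨g l, hgmem l⟩ :
          Fin (2^D) → {q : (fun _ => Fin K) hf × Bool | Reachable M1 P hf q.1 q.2}) ?_
      intro a b hab
      exact hginj (congrArg Subtype.val hab)
    simpa using hcard
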